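/- The map sending a Knapsack instance (w, v, C, P) to the PEM-1D instance with t_i(L) = w_i, t_i(H) = 0, e_i(L) = -v_i, e_i(H) = 0, T' = C, EC = -P is a correct reduction: the Knapsack instance is a yes-instance if and only if the constructed PEM-1D instance is a yes-instance. -/
import Mathlib


/-- Correctness of the Knapsack-to-PEM-1D reduction: with
`t_i(L) = w_i`, `t_i(H) = 0`, `e_i(L) = -v_i`, `e_i(H) = 0`, `T' = C`, `EC = -P`,
the Knapsack instance is a yes-instance iff the PEM-1D instance is. -/
theorem knapsack_to_pem1d_reduction_correct
    (n : ℕ) (w v : Fin n → ℚ) (C P : ℚ)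
    (hw : ∀ i, 0 < w i) (hv : ∀ i, 0 < v i) :
    (∃ S : Finset (Fin n), (∑ i ∈ S, w i) ≤ C ∧ P ≤ ∑ i ∈ S, v i) ↔
    (∃ X : Fin n → Bool,
      (∑ i, (if X i then w i else 0)) ≤ C ∧
      (∑ i, (if X i then -v i else 0)) ≤ -P) := by
  constructor
  · rintro ⟨S, h1, h2⟩
    refine ⟨fun i => i ∈ S, ?_, ?_⟩
    · simpa [Finset.sum_ite_mem] using h1
    · have : (∑ i, (if (i ∈ S : Bool) then -v i else 0)) = -(∑ i ∈ S, v i) := by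
        simp [Finset.sum_ite_mem, Finset.sum_neg_distrib]
      rw [this]
      linarith
  · rintro ⟨X, h1, h2⟩
    refine ⟨Finset.univ.filter (fun i => X i), ?_, ?_⟩
    · simpa [Finset.sum_filter] using h1
    · have h3 : -(∑ i, (if X i then -v i else 0)) = ∑ i ∈ Finset.univ.filter (fun i => X i), v i := by
        rw [← Finset.sum_neg_distrib, Finset.sum_filter]
        exact Finset.sum_congr rfl (fun i _ => by split <;> simp)
      linarith
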